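/- For every type (k,n) with 1 ≤ k < n, the marking algorithm of type (k,n) is 2·H_k-competitive: there exists a constant a such that for every request sequence σ, the expected cost of the marking algorithm satisfies E[C_M(σ)] ≤ 2·H_k·OPT(σ) + a. -/

import Mathlib

/-!
Paging model: vertices are `Fin n`, configurations are `k`-element subsets of `Fin n`.
`OPT` is the optimal offline cost, `expCost` the expected cost of a randomized
online algorithm (given by its transition kernel), starting from `{0,…,k−1}`.
`markingKernel` is the marking algorithm; `harmonic k` (from Mathlib) is the
`k`-th harmonic number `H_k`.

STATEMENT: For every type `(k,n)` with `1 ≤ k < n`, the marking algorithm of type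
`(k,n)` is `2·H_k`-competitive: there exists a constant `a` such that for every
request sequence `σ`, `E[C_M(σ)] ≤ 2·H_k·OPT(σ) + a`.
-/

open scoped ENNReal

/-- The initial configuration `{0, …, k−1}` as a subset of `Fin n`. -/
def initConf (k n : ℕ) : Finset (Fin n) :=
  Finset.univ.filter (fun v => (v : ℕ) < k)

/-- The cost of a sequence of configurations, starting from configuration `C`:
the sum over consecutive steps of the number of newly covered vertices. -/
def listCost {n : ℕ} : Finset (Fin n) → List (Finset (Fin n)) → ℕ
  | _, [] => 0
  | C, D :: L => (D \ C).card + listCost D L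

/-- `Cs` is a service of the request sequence `σ` by `k`-element configurations:
the `t`-th configuration covers the `t`-th request. -/
def Serves {n : ℕ} (k : ℕ) (σ : List (Fin n)) (Cs : List (Finset (Fin n))) : Prop :=
  List.Forall₂ (· ∈ ·) σ Cs ∧ ∀ C ∈ Cs, C.card = k

/-- The optimal offline cost of serving `σ`, starting from `{0,…,k−1}`. -/
noncomputable def OPT (k n : ℕ) (σ : List (Fin n)) : ℕ :=
  sInf {m | ∃ Cs, Serves k σ Cs ∧ listCost (initConf k n) Cs = m}

/-- A (transition kernel of a) randomized online algorithm: given the request history,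
the current configuration and a new request, produce a distribution over configurations. -/
abbrev Kernel (n : ℕ) := List (Fin n) → Finset (Fin n) → Fin n → PMF (Finset (Fin n))

/-- The distribution over configuration sequences induced by running kernel `K`
on request sequence `σ`, with history `hist` and current configuration `C`. -/
noncomputable def runFrom {n : ℕ} (K : Kernel n) :
    List (Fin n) → List (Fin n) → Finset (Fin n) → PMF (List (Finset (Fin n)))
  | [], _, _ => PMF.pure []
  | r :: rest, hist, C =>
      (K hist C r).bind fun C' =>
        (runFrom K rest (hist ++ [r]) C').map fun L => C' :: L

/-- The distribution over configuration sequences induced by running kernel `K`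
on request sequence `σ`, starting from the configuration `{0,…,k−1}`. -/
noncomputable def run {n : ℕ} (k : ℕ) (K : Kernel n) (σ : List (Fin n)) :
    PMF (List (Finset (Fin n))) :=
  runFrom K σ [] (initConf k n)

/-- The expected cost of the randomized online algorithm with kernel `K` on `σ`. -/
noncomputable def expCost {n : ℕ} (k : ℕ) (K : Kernel n) (σ : List (Fin n)) : ℝ :=
  ∑' Cs : List (Finset (Fin n)),
    ((run k K σ) Cs).toReal * (listCost (initConf k n) Cs : ℝ)

/-- One step of the marking process: mark `r`; if `k+1` vertices are marked,
erase all marks except the one on `r`. -/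
def markUpdate {n : ℕ} (k : ℕ) (M : Finset (Fin n)) (r : Fin n) : Finset (Fin n) :=
  if (insert r M).card = k + 1 then {r} else insert r M

/-- The set of marked vertices after processing the request sequence `σ`
(initially the vertices `{0,…,k−1}` are marked). -/
def marksAfter {n : ℕ} (k : ℕ) (σ : List (Fin n)) : Finset (Fin n) :=
  σ.foldl (markUpdate k) (initConf k n)

/-- The marking algorithm of type `(k,n)`: on a request `r`, first update the marks;
if `r` is covered do nothing, and otherwise evict a uniformly random unmarked
covered vertex and move its server to `r`. -/
noncomputable def markingKernel (k n : ℕ) : Kernel n := fun hist C r =>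
  let M := marksAfter k (hist ++ [r])
  if r ∈ C then PMF.pure C
  else if h : (C \ M).Nonempty then
    (PMF.uniformOfFinset (C \ M) h).map fun u => insert r (C.erase u)
  else PMF.pure (insert r (C.erase (if h2 : C.Nonempty then C.min' h2 else r)))


open Finset
namespace Marking
open Finset
variable {n : ℕ}

lemma card_initConf {k n : ℕ} (hkn : k ≤ n) : (initConf k n).card = k := by
  classical
  have : (initConf k n) = (Finset.range k).attachFin
      (fun m hm => lt_of_lt_of_le (Finset.mem_range.mp hm) hkn) := by
    ext v
    simp [initConf, Finset.mem_attachFin]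
  rw [this, Finset.card_attachFin, Finset.card_range]

def stepSt (k : ℕ) (p : Finset (Fin n) × Finset (Fin n)) (r : Fin n) :
    Finset (Fin n) × Finset (Fin n) :=
  if (insert r p.1).card = k + 1 then ({r}, insert r p.1)
  else (insert r p.1, insert r p.2)

def stAfter (k n : ℕ) (σ : List (Fin n)) : Finset (Fin n) × Finset (Fin n) :=
  σ.foldl (stepSt k) (initConf k n, initConf k n)

lemma stepSt_fst (k : ℕ) (p : Finset (Fin n) × Finset (Fin n)) (r : Fin n) :
    (stepSt k p r).1 = markUpdate k p.1 r := by
  unfold stepSt markUpdate; split <;> rfl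

lemma foldl_stepSt_fst (k : ℕ) (σ : List (Fin n)) (p : Finset (Fin n) × Finset (Fin n)) :
    (σ.foldl (stepSt k) p).1 = σ.foldl (markUpdate k) p.1 := by
  induction σ generalizing p with
  | nil => rfl
  | cons r σ ih => rw [List.foldl_cons, List.foldl_cons, ih, stepSt_fst]

lemma stAfter_fst (k : ℕ) (σ : List (Fin n)) :
    (stAfter k n σ).1 = marksAfter k σ :=
  foldl_stepSt_fst k σ _

lemma stAfter_append (k : ℕ) (σ : List (Fin n)) (r : Fin n) :
    stAfter k n (σ ++ [r]) = stepSt k (stAfter k n σ) r := by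
  unfold stAfter; rw [List.foldl_append]; rfl

lemma marksAfter_append (k : ℕ) (σ : List (Fin n)) (r : Fin n) :
    marksAfter k (σ ++ [r]) = markUpdate k (marksAfter k σ) r := by
  unfold marksAfter; rw [List.foldl_append]; rfl

structure InvSt (k : ℕ) (p : Finset (Fin n) × Finset (Fin n)) : Prop where
  sub : p.1 ⊆ p.2
  card1 : p.1.card ≤ k
  card2 : k ≤ p.2.card
  card3 : p.2.card ≤ p.1.card + k

lemma invSt_init {k : ℕ} (hkn : k ≤ n) : InvSt k ((initConf k n, initConf k n)) :=
  ⟨subset_rfl, le_of_eq (card_initConf hkn), le_of_eq (card_initConf hkn).symm,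
    by rw [card_initConf hkn]; omega⟩

lemma invSt_step {k : ℕ} (hk : 1 ≤ k) {p : Finset (Fin n) × Finset (Fin n)}
    (h : InvSt k p) (r : Fin n) : InvSt k (stepSt k p r) := by
  classical
  have h1 : (insert r p.1).card ≤ p.1.card + 1 := card_insert_le _ _
  have h1' : p.1.card ≤ (insert r p.1).card := card_le_card (subset_insert _ _)
  have h2 : (insert r p.2).card ≤ p.2.card + 1 := card_insert_le _ _
  have h2' : p.2.card ≤ (insert r p.2).card := card_le_card (subset_insert _ _)
  have hc1 := h.card1; have hc2 := h.card2; have hc3 := h.card3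
  unfold stepSt
  split
  · next hres =>
    refine ⟨by intro x hx; simp only [mem_singleton] at hx; simp [hx], ?_, ?_, ?_⟩
    · show ({r} : Finset (Fin n)).card ≤ k; rw [card_singleton]; omega
    · show k ≤ (insert r p.1).card; omega
    · show (insert r p.1).card ≤ ({r} : Finset (Fin n)).card + k; rw [card_singleton]; omega
  · next hres =>
    refine ⟨insert_subset_insert _ h.sub, ?_, ?_, ?_⟩
    · show (insert r p.1).card ≤ k; omega
    · show k ≤ (insert r p.2).card; omega
    show (insert r p.2).card ≤ (insert r p.1).card + k
    by_cases hr : r ∈ p.1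
    · have e1 : insert r p.1 = p.1 := insert_eq_self.2 hr
      have e2 : insert r p.2 = p.2 := insert_eq_self.2 (h.sub hr)
      rw [e1, e2]; exact h.card3
    · have e1 : (insert r p.1).card = p.1.card + 1 := card_insert_of_notMem hr
      omega

lemma invSt_stAfter {k : ℕ} (hk : 1 ≤ k) (hkn : k ≤ n) (σ : List (Fin n)) :
    InvSt k (stAfter k n σ) := by
  induction σ using List.reverseRecOn with
  | nil => exact invSt_init hkn
  | append_singleton σ r ih => rw [stAfter_append]; exact invSt_step hk ih r


/-- The set of possible configurations: `k`-sets between `M` and `W`. -/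
def confs (k : ℕ) (M W : Finset (Fin n)) : Finset (Finset (Fin n)) :=
  W.powerset.filter (fun C => M ⊆ C ∧ C.card = k)

lemma mem_confs {k : ℕ} {M W C : Finset (Fin n)} :
    C ∈ confs k M W ↔ C ⊆ W ∧ M ⊆ C ∧ C.card = k := by
  simp [confs, and_assoc]

lemma card_confs {k : ℕ} {M W : Finset (Fin n)} (hMW : M ⊆ W) (hMk : M.card ≤ k) :
    (confs k M W).card = (W.card - M.card).choose (k - M.card) := by
  classical
  rw [← card_sdiff_of_subset hMW, ← Finset.card_powersetCard (k - M.card) (W \ M)]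
  apply Finset.card_bij' (fun C _ => C \ M) (fun S _ => S ∪ M)
  · intro C hC
    rw [mem_confs] at hC
    rw [Finset.mem_powersetCard]
    exact ⟨sdiff_subset_sdiff hC.1 subset_rfl, by rw [card_sdiff_of_subset hC.2.1, hC.2.2]⟩
  · intro S hS
    rw [Finset.mem_powersetCard] at hS
    have hSW : S ⊆ W \ M := hS.1
    have hdisj : Disjoint S M := by
      intro x hx1 hx2 y hy
      have := hSW (hx1 hy)
      rw [mem_sdiff] at this
      exact absurd (hx2 hy) this.2
    rw [mem_confs]
    refine ⟨union_subset (hSW.trans sdiff_subset) hMW, subset_union_right, ?_⟩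
    rw [card_union_of_disjoint hdisj, hS.2]
    omega
  · intro C hC
    rw [mem_confs] at hC
    exact sdiff_union_of_subset hC.2.1
  · intro S hS
    rw [Finset.mem_powersetCard] at hS
    apply union_sdiff_cancel_right
    intro x hx1 hx2 y hy
    have := hS.1 (hx1 hy)
    rw [mem_sdiff] at this
    exact absurd (hx2 hy) this.2

lemma confs_nonempty {k : ℕ} {M W : Finset (Fin n)} (hMW : M ⊆ W) (hMk : M.card ≤ k)
    (hkW : k ≤ W.card) : (confs k M W).Nonempty := by
  obtain ⟨u, hu1, hu2, hu3⟩ := Finset.exists_subsuperset_card_eq hMW hMk hkW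
  exact ⟨u, mem_confs.2 ⟨hu2, hu1, by omega⟩⟩

lemma confs_card_ne_zero {k : ℕ} {M W : Finset (Fin n)} (hMW : M ⊆ W) (hMk : M.card ≤ k)
    (hkW : k ≤ W.card) : ((confs k M W).card : ℝ≥0∞) ≠ 0 := by
  have := (confs_nonempty hMW hMk hkW).card_pos
  simp only [ne_eq, Nat.cast_eq_zero]
  omega

lemma confs_self {k : ℕ} {M : Finset (Fin n)} (hM : M.card = k) :
    confs k M M = {M} := by
  ext C
  rw [mem_confs, mem_singleton]
  constructor
  · rintro ⟨h1, h2, h3⟩; exact subset_antisymm h1 h2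
  · rintro rfl; exact ⟨subset_rfl, subset_rfl, hM⟩

/-- when `M.card = k`, `confs k M W = {M}`. -/
lemma confs_of_card_eq {k : ℕ} {M W : Finset (Fin n)} (hMW : M ⊆ W) (hM : M.card = k) :
    confs k M W = {M} := by
  ext C
  rw [mem_confs, mem_singleton]
  constructor
  · rintro ⟨h1, h2, h3⟩
    exact (Finset.eq_of_subset_of_card_le h2 (by omega)).symm
  · rintro rfl; exact ⟨hMW, subset_rfl, hM⟩


section TsumHelpers
variable {α β : Type*}

lemma tsum_pure_mul (a : α) (h : α → ℝ≥0∞) :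
    ∑' b, (PMF.pure a) b * h b = h a := by
  simp only [PMF.pure_apply]
  rw [tsum_eq_single a (fun b hb => by simp [hb])]
  simp

lemma tsum_map_mul (p : PMF α) (f : α → β) (h : β → ℝ≥0∞) :
    ∑' b, (p.map f) b * h b = ∑' a, p a * h (f a) := by
  simp only [PMF.map_apply]
  simp_rw [← ENNReal.tsum_mul_right]
  rw [ENNReal.tsum_comm]
  refine tsum_congr fun a => ?_
  rw [tsum_eq_single (f a) (fun b hb => by simp [hb])]
  simp

lemma tsum_bind_mul (p : PMF α) (q : α → PMF β) (h : β → ℝ≥0∞) :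
    ∑' b, (p.bind q) b * h b = ∑' a, p a * ∑' b, q a b * h b := by
  simp only [PMF.bind_apply]
  simp_rw [← ENNReal.tsum_mul_right]
  rw [ENNReal.tsum_comm]
  refine tsum_congr fun a => ?_
  rw [← ENNReal.tsum_mul_left]
  exact tsum_congr fun b => by ring

lemma tsum_uniform_mul [DecidableEq α] (s : Finset α) (hs : s.Nonempty) (h : α → ℝ≥0∞) :
    ∑' a, (PMF.uniformOfFinset s hs) a * h a = ∑ a ∈ s, (s.card : ℝ≥0∞)⁻¹ * h a := by
  rw [tsum_eq_sum (s := s) (fun b hb => by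
    rw [PMF.uniformOfFinset_apply_of_notMem hs hb, zero_mul])]
  exact Finset.sum_congr rfl fun a ha => by rw [PMF.uniformOfFinset_apply_of_mem hs ha]

end TsumHelpers

/-- expected cost of running kernel `K` on requests `rest` after history `hist`
from configuration `C`. -/
noncomputable def eCost {n : ℕ} (K : Kernel n) (rest hist : List (Fin n))
    (C : Finset (Fin n)) : ℝ≥0∞ :=
  ∑' L, (runFrom K rest hist C L) * (listCost C L : ℝ≥0∞)

lemma eCost_nil {n : ℕ} (K : Kernel n) (hist : List (Fin n)) (C : Finset (Fin n)) :
    eCost K [] hist C = 0 := by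
  unfold eCost
  simp only [runFrom]
  rw [tsum_pure_mul]
  simp [listCost]

lemma eCost_cons {n : ℕ} (K : Kernel n) (r : Fin n) (rest hist : List (Fin n))
    (C : Finset (Fin n)) :
    eCost K (r :: rest) hist C
      = ∑' C', (K hist C r) C' *
          (((C' \ C).card : ℝ≥0∞) + eCost K rest (hist ++ [r]) C') := by
  unfold eCost
  simp only [runFrom]
  rw [tsum_bind_mul]
  refine tsum_congr fun C' => ?_
  congr 1
  rw [tsum_map_mul]
  have hc : ∀ L, (listCost C (C' :: L) : ℝ≥0∞)
      = ((C' \ C).card : ℝ≥0∞) + (listCost C' L : ℝ≥0∞) := by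
    intro L; rw [listCost]; push_cast; ring
  calc ∑' L, (runFrom K rest (hist ++ [r]) C') L * (listCost C (C' :: L) : ℝ≥0∞)
      = ∑' L, ((runFrom K rest (hist ++ [r]) C') L * ((C' \ C).card : ℝ≥0∞)
          + (runFrom K rest (hist ++ [r]) C') L * (listCost C' L : ℝ≥0∞)) := by
        refine tsum_congr fun L => ?_
        rw [hc L, mul_add]
    _ = ((C' \ C).card : ℝ≥0∞) + eCost K rest (hist ++ [r]) C' := by
        rw [ENNReal.tsum_add, ENNReal.tsum_mul_right, PMF.tsum_coe, one_mul]
        rfl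

lemma enn_ratio' {u p v q : ℕ} (hp : p ≠ 0) (hq : q ≠ 0) (h : u * q = v * p) :
    (u : ℝ≥0∞) / (p : ℝ≥0∞) = (v : ℝ≥0∞) / (q : ℝ≥0∞) := by
  rw [ENNReal.div_eq_div_iff (by exact_mod_cast hq) (ENNReal.natCast_ne_top q)
    (by exact_mod_cast hp) (ENNReal.natCast_ne_top p)]
  have hn : q * u = p * v := by rw [Nat.mul_comm q u, Nat.mul_comm p v]; exact h
  exact_mod_cast congrArg (Nat.cast : ℕ → ℝ≥0∞) hn

lemma enn_ratio {u p v q : ℕ} (hp : p ≠ 0) (hq : q ≠ 0) (h : u * q = v * p) :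
    (u : ℝ≥0∞) * ((p : ℝ≥0∞))⁻¹ = (v : ℝ≥0∞) * ((q : ℝ≥0∞))⁻¹ := by
  rw [← div_eq_mul_inv, ← div_eq_mul_inv]
  exact enn_ratio' hp hq h

lemma ofReal_nat_div (a b : ℕ) (hb : b ≠ 0) :
    ENNReal.ofReal ((a : ℝ) / (b : ℝ)) = (a : ℝ≥0∞) / (b : ℝ≥0∞) := by
  rw [ENNReal.ofReal_div_of_pos (by exact_mod_cast Nat.pos_of_ne_zero hb),
    ENNReal.ofReal_natCast, ENNReal.ofReal_natCast]

lemma nat_id1 (d j : ℕ) (hd : 1 ≤ d) :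
    (d - 1).choose j * d = (d - j) * d.choose j := by
  obtain ⟨e, rfl⟩ : ∃ e, d = e + 1 := ⟨d - 1, by omega⟩
  have h1 := Nat.add_one_mul_choose_eq e j
  have h2 := Nat.choose_succ_right_eq (e + 1) j
  simp only [Nat.succ_eq_add_one, Nat.add_sub_cancel] at *
  calc e.choose j * (e + 1) = (e + 1) * e.choose j := Nat.mul_comm _ _
    _ = (e + 1).choose (j + 1) * (j + 1) := h1
    _ = (e + 1).choose j * (e + 1 - j) := h2
    _ = (e + 1 - j) * (e + 1).choose j := Nat.mul_comm _ _

lemma nat_id2 (d j : ℕ) (hd : 1 ≤ d) (hj : 1 ≤ j) :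
    j * d.choose j = (d - 1).choose (j - 1) * d := by
  obtain ⟨e, rfl⟩ : ∃ e, d = e + 1 := ⟨d - 1, by omega⟩
  obtain ⟨i, rfl⟩ : ∃ i, j = i + 1 := ⟨j - 1, by omega⟩
  have h1 := Nat.add_one_mul_choose_eq e i
  simp only [Nat.succ_eq_add_one, Nat.add_sub_cancel] at *
  calc (i + 1) * (e + 1).choose (i + 1) = (e + 1).choose (i + 1) * (i + 1) := Nat.mul_comm _ _
    _ = (e + 1) * e.choose i := h1.symm
    _ = e.choose i * (e + 1) := Nat.mul_comm _ _

lemma nat_id3 (d j : ℕ) (hj : 1 ≤ j) (hjd : j ≤ d) :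
    j * d.choose j = (d - j + 1) * d.choose (j - 1) := by
  obtain ⟨i, rfl⟩ : ∃ i, j = i + 1 := ⟨j - 1, by omega⟩
  have h2 := Nat.choose_succ_right_eq d i
  have h3 : d - i = d - (i + 1) + 1 := by omega
  simp only [Nat.add_sub_cancel] at *
  calc (i + 1) * d.choose (i + 1) = d.choose (i + 1) * (i + 1) := Nat.mul_comm _ _
    _ = d.choose i * (d - i) := h2
    _ = d.choose i * (d - (i + 1) + 1) := by rw [h3]
    _ = (d - (i + 1) + 1) * d.choose i := Nat.mul_comm _ _

lemma reindex {k : ℕ} {M W : Finset (Fin n)} (r : Fin n) (hrM : r ∉ M)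
    (g : Finset (Fin n) → ℝ≥0∞) :
    ∑ C ∈ (confs k M W).filter (fun C => r ∉ C), ∑ u ∈ C \ M, g (insert r (C.erase u))
      = ∑ C' ∈ confs k (insert r M) (insert r W), ((W \ C').card : ℝ≥0∞) * g C' := by
  classical
  have hR : ∀ C' ∈ confs k (insert r M) (insert r W),
      ((W \ C').card : ℝ≥0∞) * g C' = ∑ _v ∈ W \ C', g C' := by
    intro C' _; rw [Finset.sum_const, nsmul_eq_mul]
  rw [Finset.sum_congr rfl hR,
    ← Finset.sum_sigma (f := fun x : Σ _C : Finset (Fin n), Fin n => g (insert r (x.1.erase x.2))),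
    ← Finset.sum_sigma (f := fun x : Σ _C : Finset (Fin n), Fin n => g x.1)]
  refine Finset.sum_nbij'
    (fun x => (⟨insert r (x.1.erase x.2), x.2⟩ : Σ _C : Finset (Fin n), Fin n))
    (fun y => (⟨insert y.2 (y.1.erase r), y.2⟩ : Σ _C : Finset (Fin n), Fin n))
    ?_ ?_ ?_ ?_ ?_
  · rintro ⟨C, u⟩ hx
    rw [Finset.mem_sigma] at hx
    obtain ⟨hC, hu⟩ := hx
    rw [Finset.mem_filter, mem_confs] at hC
    obtain ⟨⟨hCW, hMC, hCk⟩, hrC⟩ := hC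
    rw [mem_sdiff] at hu
    obtain ⟨huC, huM⟩ := hu
    have hk1 : 1 ≤ k := by
      rw [← hCk]; exact card_pos.2 ⟨u, huC⟩
    have hur : u ≠ r := fun h => hrC (h ▸ huC)
    rw [Finset.mem_sigma]
    constructor
    · rw [mem_confs]
      refine ⟨insert_subset_insert _ ((erase_subset _ _).trans hCW), ?_, ?_⟩
      · exact insert_subset_insert _ ((subset_erase).2 ⟨hMC, huM⟩)
      · rw [card_insert_of_notMem (fun h => hrC (erase_subset _ _ h)),
          card_erase_of_mem huC, hCk]
        omega
    · rw [mem_sdiff]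
      refine ⟨hCW huC, ?_⟩
      rw [mem_insert]
      push_neg
      exact ⟨hur, notMem_erase _ _⟩
  · rintro ⟨C', v⟩ hy
    rw [Finset.mem_sigma] at hy
    obtain ⟨hC', hv⟩ := hy
    rw [mem_confs] at hC'
    obtain ⟨hCW, hMC, hCk⟩ := hC'
    rw [mem_sdiff] at hv
    obtain ⟨hvW, hvC⟩ := hv
    have hrC' : r ∈ C' := hMC (mem_insert_self _ _)
    have hMC' : M ⊆ C' := (subset_insert _ _).trans hMC
    have hrv : r ≠ v := fun h => hvC (h ▸ hrC')
    have hk1 : 1 ≤ k := by rw [← hCk]; exact card_pos.2 ⟨r, hrC'⟩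
    rw [Finset.mem_sigma]
    constructor
    · rw [Finset.mem_filter, mem_confs]
      refine ⟨⟨?_, ?_, ?_⟩, ?_⟩
      · refine insert_subset hvW ?_
        intro x hx
        rw [mem_erase] at hx
        have := hCW hx.2
        rw [mem_insert] at this
        exact this.resolve_left hx.1
      · refine subset_trans ?_ (subset_insert _ _)
        exact (subset_erase).2 ⟨hMC', hrM⟩
      · rw [card_insert_of_notMem (fun h => hvC (erase_subset _ _ h)),
          card_erase_of_mem hrC', hCk]
        omega
      · rw [mem_insert]
        push_neg
        exact ⟨hrv, notMem_erase _ _⟩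
    · rw [mem_sdiff, mem_insert]
      refine ⟨Or.inl rfl, ?_⟩
      intro hvM
      exact hvC (hMC' hvM)
  · rintro ⟨C, u⟩ hx
    rw [Finset.mem_sigma] at hx
    obtain ⟨hC, hu⟩ := hx
    rw [Finset.mem_filter, mem_confs] at hC
    rw [mem_sdiff] at hu
    have h1 : (insert r (C.erase u)).erase r = C.erase u :=
      Finset.erase_insert (fun h => hC.2 (erase_subset _ _ h))
    refine Sigma.ext ?_ HEq.rfl
    dsimp only
    rw [h1, insert_erase hu.1]
  · rintro ⟨C', v⟩ hy
    rw [Finset.mem_sigma] at hy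
    obtain ⟨hC', hv⟩ := hy
    rw [mem_confs] at hC'
    rw [mem_sdiff] at hv
    have hrC' : r ∈ C' := hC'.2.1 (mem_insert_self _ _)
    have h1 : (insert v (C'.erase r)).erase v = C'.erase r :=
      Finset.erase_insert (fun h => hv.2 (erase_subset _ _ h))
    refine Sigma.ext ?_ HEq.rfl
    dsimp only
    rw [h1, insert_erase hrC']
  · rintro ⟨C, u⟩ _
    rfl

noncomputable def fpR {n : ℕ} (k : ℕ) (M W : Finset (Fin n)) (r : Fin n) : ℝ :=
  if r ∈ M then 0
  else if r ∈ W ∧ M.card < k then ((W.card - k : ℕ) : ℝ) / ((W.card - M.card : ℕ) : ℝ)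
  else 1

noncomputable def costBound {n : ℕ} (k : ℕ) : List (Fin n) → Finset (Fin n) × Finset (Fin n) → ℝ
  | [], _ => 0
  | r :: rest, p => fpR k p.1 p.2 r + costBound k rest (stepSt k p r)

def cleanStep {n : ℕ} (k : ℕ) (p : Finset (Fin n) × Finset (Fin n)) (r : Fin n) : ℕ :=
  if r ∈ p.1 then 0 else if (insert r p.1).card = k + 1 then 1
  else if r ∈ p.2 then 0 else 1

def cleanCt {n : ℕ} (k : ℕ) : List (Fin n) → Finset (Fin n) × Finset (Fin n) → ℕ
  | [], _ => 0
  | r :: rest, p => cleanStep k p r + cleanCt k rest (stepSt k p r)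

lemma kernel_pure {k : ℕ} (hist : List (Fin n)) (C : Finset (Fin n)) (r : Fin n)
    (hrC : r ∈ C) : markingKernel k n hist C r = PMF.pure C := by
  simp only [markingKernel]
  rw [if_pos hrC]

lemma kernel_fault {k : ℕ} (hist : List (Fin n)) (C : Finset (Fin n)) (r : Fin n)
    (hrC : r ∉ C) (h : (C \ marksAfter k (hist ++ [r])).Nonempty) :
    markingKernel k n hist C r
      = (PMF.uniformOfFinset (C \ marksAfter k (hist ++ [r])) h).map
          (fun u => insert r (C.erase u)) := by
  simp only [markingKernel]
  rw [if_neg hrC, dif_pos h]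

lemma insert_erase_sdiff {C : Finset (Fin n)} {r u : Fin n} (hrC : r ∉ C) :
    insert r (C.erase u) \ C = {r} := by
  ext x
  simp only [mem_sdiff, mem_insert, mem_erase, mem_singleton]
  constructor
  · rintro ⟨h1 | h1, h2⟩
    · exact h1
    · exact absurd h1.2 h2
  · rintro rfl
    exact ⟨Or.inl rfl, hrC⟩

lemma step_avg {k : ℕ} (hk : 1 ≤ k) (hist : List (Fin n)) {M W : Finset (Fin n)}
    (hinv : InvSt k (M, W)) (hmark : marksAfter k hist = M) (r : Fin n)
    (g : Finset (Fin n) → ℝ≥0∞) :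
    ∑ C ∈ confs k M W, ((confs k M W).card : ℝ≥0∞)⁻¹ *
        (∑' C', (markingKernel k n hist C r) C' * (((C' \ C).card : ℝ≥0∞) + g C'))
      = ENNReal.ofReal (fpR k M W r)
        + ∑ C' ∈ confs k (stepSt k (M, W) r).1 (stepSt k (M, W) r).2,
            ((confs k (stepSt k (M, W) r).1 (stepSt k (M, W) r).2).card : ℝ≥0∞)⁻¹ * g C' := by
  classical
  have hMW : M ⊆ W := hinv.sub
  have hMk : M.card ≤ k := hinv.card1
  have hkW : k ≤ W.card := hinv.card2
  have hmark' : marksAfter k (hist ++ [r]) = markUpdate k M r := by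
    rw [marksAfter_append, hmark]
  have hA0 : ((confs k M W).card : ℝ≥0∞) ≠ 0 := confs_card_ne_zero hMW hMk hkW
  by_cases hrM : r ∈ M
  · -- request already marked: nothing happens
    have hstep : stepSt k (M, W) r = (M, W) := by
      unfold stepSt
      rw [if_neg]
      · dsimp only
        rw [insert_eq_self.2 hrM, insert_eq_self.2 (hMW hrM)]
      · dsimp only
        rw [insert_eq_self.2 hrM]
        omega
    have hfp : fpR k M W r = 0 := by unfold fpR; rw [if_pos hrM]
    rw [hstep, hfp, ENNReal.ofReal_zero, zero_add]
    dsimp only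
    refine Finset.sum_congr rfl fun C hC => ?_
    have hrC : r ∈ C := (mem_confs.1 hC).2.1 hrM
    rw [kernel_pure hist C r hrC, tsum_pure_mul, sdiff_self]
    simp
  · by_cases hMc : M.card = k
    · -- reset case
      have hins : (insert r M).card = k + 1 := by
        rw [card_insert_of_notMem hrM, hMc]
      have hmu : markUpdate k M r = {r} := by unfold markUpdate; rw [if_pos hins]
      have hstep : stepSt k (M, W) r = ({r}, insert r M) := by
        unfold stepSt; rw [if_pos hins]
      have hA : confs k M W = {M} := confs_of_card_eq hMW hMc
      have hMne : M.Nonempty := by rw [← card_pos, hMc]; omega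
      have hsd : M \ marksAfter k (hist ++ [r]) = M := by
        rw [hmark', hmu, sdiff_singleton_eq_erase, erase_eq_of_notMem hrM]
      have hne : (M \ marksAfter k (hist ++ [r])).Nonempty := by rw [hsd]; exact hMne
      have hfp : fpR k M W r = 1 := by
        unfold fpR
        rw [if_neg hrM, if_neg (by rintro ⟨-, h2⟩; omega)]
      rw [hA, hstep, hfp, ENNReal.ofReal_one]
      dsimp only
      rw [Finset.sum_singleton, card_singleton, Nat.cast_one, inv_one, one_mul]
      rw [kernel_fault hist M r hrM hne, tsum_map_mul, tsum_uniform_mul, hsd]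
      have hterm : ∀ u ∈ M, ((M.card : ℝ≥0∞))⁻¹ *
          (((insert r (M.erase u) \ M).card : ℝ≥0∞) + g (insert r (M.erase u)))
          = (M.card : ℝ≥0∞)⁻¹ + (M.card : ℝ≥0∞)⁻¹ * g (insert r (M.erase u)) := by
        intro u hu
        rw [insert_erase_sdiff hrM, card_singleton, Nat.cast_one, mul_add, mul_one]
      rw [Finset.sum_congr rfl hterm, Finset.sum_add_distrib, Finset.sum_const,
        nsmul_eq_mul, ENNReal.mul_inv_cancel (by exact_mod_cast hMne.card_pos.ne')
          (ENNReal.natCast_ne_top _)]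
      congr 1
      -- image description of the new configuration set
      have hinj : ∀ x ∈ M, ∀ y ∈ M,
          insert r (M.erase x) = insert r (M.erase y) → x = y := by
        intro x hx y hy hxy
        by_contra hne'
        have h1 : x ∈ insert r (M.erase y) := mem_insert_of_mem (mem_erase.2 ⟨hne', hx⟩)
        rw [← hxy, mem_insert, mem_erase] at h1
        rcases h1 with h1 | h1
        · exact hrM (h1 ▸ hx)
        · exact h1.1 rfl
      have hA' : confs k {r} (insert r M) = M.image (fun u => insert r (M.erase u)) := by
        ext C'
        rw [mem_confs, Finset.mem_image]
        constructor
        · rintro ⟨h1, h2, h3⟩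
          have hrC' : r ∈ C' := h2 (mem_singleton_self r)
          have hMC' : (M \ C').Nonempty := by
            rw [← card_pos]
            by_contra hcon
            push_neg at hcon
            have : M ⊆ C' := by
              intro x hx
              by_contra hxC
              have : x ∈ M \ C' := mem_sdiff.2 ⟨hx, hxC⟩
              have := card_pos.2 ⟨x, this⟩
              omega
            have : insert r M ⊆ C' := insert_subset hrC' this
            have := card_le_card this
            rw [hins, h3] at this
            omega
          obtain ⟨u, hu⟩ := hMC'
          rw [mem_sdiff] at hu
          refine ⟨u, hu.1, ?_⟩
          have hsub : C' ⊆ insert r (M.erase u) := by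
            intro x hx
            rcases mem_insert.1 (h1 hx) with h | h
            · exact mem_insert.2 (Or.inl h)
            · refine mem_insert.2 (Or.inr (mem_erase.2 ⟨?_, h⟩))
              rintro rfl
              exact hu.2 hx
          have hcard : (insert r (M.erase u)).card = k := by
            rw [card_insert_of_notMem (fun hc => hrM (erase_subset _ _ hc)),
              card_erase_of_mem hu.1, hMc]
            omega
          exact (Finset.eq_of_subset_of_card_le hsub (by rw [hcard, h3])).symm
        · rintro ⟨u, hu, rfl⟩
          refine ⟨?_, ?_, ?_⟩
          · exact insert_subset_insert _ (erase_subset _ _)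
          · exact singleton_subset_iff.2 (mem_insert_self _ _)
          · rw [card_insert_of_notMem (fun hc => hrM (erase_subset _ _ hc)),
              card_erase_of_mem hu, hMc]
            omega
      rw [hA', Finset.sum_image hinj, Finset.card_image_of_injOn hinj, hMc]
    · -- non-reset cases
      have hMlt : M.card < k := lt_of_le_of_ne hMk hMc
      have hmu : markUpdate k M r = insert r M := by
        unfold markUpdate
        rw [if_neg]
        rw [card_insert_of_notMem hrM]
        omega
      have hstep : stepSt k (M, W) r = (insert r M, insert r W) := by
        unfold stepSt
        rw [if_neg]
        dsimp only
        rw [card_insert_of_notMem hrM]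
        omega
      -- split the sum according to whether `r` is covered
      rw [← Finset.sum_filter_add_sum_filter_not (confs k M W) (fun C => r ∈ C)]
      have hyes : ∀ C ∈ (confs k M W).filter (fun C => r ∈ C),
          ((confs k M W).card : ℝ≥0∞)⁻¹ *
            (∑' C', (markingKernel k n hist C r) C' * (((C' \ C).card : ℝ≥0∞) + g C'))
          = ((confs k M W).card : ℝ≥0∞)⁻¹ * g C := by
        intro C hC
        have hrC : r ∈ C := (Finset.mem_filter.1 hC).2
        rw [kernel_pure hist C r hrC, tsum_pure_mul, sdiff_self]
        simp
      have hno : ∀ C ∈ (confs k M W).filter (fun C => r ∉ C),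
          ((confs k M W).card : ℝ≥0∞)⁻¹ *
            (∑' C', (markingKernel k n hist C r) C' * (((C' \ C).card : ℝ≥0∞) + g C'))
          = ((confs k M W).card : ℝ≥0∞)⁻¹ +
            ∑ u ∈ C \ M, ((confs k M W).card : ℝ≥0∞)⁻¹ *
              (((k - M.card : ℕ) : ℝ≥0∞))⁻¹ * g (insert r (C.erase u)) := by
        intro C hC
        rw [Finset.mem_filter] at hC
        obtain ⟨hC, hrC⟩ := hC
        rw [mem_confs] at hC
        obtain ⟨hCW, hMC, hCk⟩ := hC
        have hsdC : C \ marksAfter k (hist ++ [r]) = C \ M := by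
          rw [hmark', hmu]
          ext x
          simp only [mem_sdiff, mem_insert]
          constructor
          · rintro ⟨h1, h2⟩; exact ⟨h1, fun h => h2 (Or.inr h)⟩
          · rintro ⟨h1, h2⟩
            refine ⟨h1, ?_⟩
            rintro (rfl | h)
            · exact hrC h1
            · exact h2 h
        have hcardCM : (C \ M).card = k - M.card := by
          rw [card_sdiff_of_subset hMC, hCk]
        have hCMne : (C \ M).Nonempty := by
          rw [← card_pos, hcardCM]; omega
        have hne : (C \ marksAfter k (hist ++ [r])).Nonempty := by
          rw [hsdC]; exact hCMne
        rw [kernel_fault hist C r hrC hne, tsum_map_mul, tsum_uniform_mul, hsdC, hcardCM]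
        have hterm : ∀ u ∈ C \ M, (((k - M.card : ℕ) : ℝ≥0∞))⁻¹ *
            (((insert r (C.erase u) \ C).card : ℝ≥0∞) + g (insert r (C.erase u)))
            = ((k - M.card : ℕ) : ℝ≥0∞)⁻¹
              + ((k - M.card : ℕ) : ℝ≥0∞)⁻¹ * g (insert r (C.erase u)) := by
          intro u hu
          rw [insert_erase_sdiff hrC, card_singleton, Nat.cast_one, mul_add, mul_one]
        rw [Finset.sum_congr rfl hterm, Finset.sum_add_distrib, Finset.sum_const, hcardCM,
          nsmul_eq_mul, ENNReal.mul_inv_cancel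
            (by rw [Ne, Nat.cast_eq_zero]; omega : ((k - M.card : ℕ) : ℝ≥0∞) ≠ 0)
            (ENNReal.natCast_ne_top _), mul_add, mul_one, Finset.mul_sum]
        congr 1
        exact Finset.sum_congr rfl fun u hu => by rw [mul_assoc]
      rw [Finset.sum_congr rfl hyes, Finset.sum_congr rfl hno]
      rw [Finset.sum_add_distrib, Finset.sum_const, nsmul_eq_mul]
      have hreidx := reindex (k := k) (M := M) (W := W) r hrM g
      simp_rw [← Finset.mul_sum]
      rw [hreidx, hstep]
      dsimp only
      have hj0 : ((k - M.card : ℕ) : ℝ≥0∞) ≠ 0 := by rw [Ne, Nat.cast_eq_zero]; omega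
      have hjt : ((k - M.card : ℕ) : ℝ≥0∞) ≠ ⊤ := ENNReal.natCast_ne_top _
      have hAcard : (confs k M W).card = (W.card - M.card).choose (k - M.card) :=
        card_confs hMW hMk
      have hAn0 : (confs k M W).card ≠ 0 := (confs_nonempty hMW hMk hkW).card_pos.ne'
      by_cases hrW : r ∈ W
      · -- stale request
        have hiW : insert r W = W := insert_eq_self.2 hrW
        rw [hiW]
        have hMW' : insert r M ⊆ W := insert_subset hrW hMW
        have hMk' : (insert r M).card ≤ k := by
          rw [card_insert_of_notMem hrM]; omega
        have hA' : (confs k (insert r M) W).card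
            = (W.card - M.card - 1).choose (k - M.card - 1) := by
          rw [card_confs hMW' hMk', card_insert_of_notMem hrM]
          congr 1 <;> omega
        have hA'n0 : (confs k (insert r M) W).card ≠ 0 :=
          (confs_nonempty hMW' hMk' hkW).card_pos.ne'
        have hyesA : (confs k M W).filter (fun C => r ∈ C) = confs k (insert r M) W := by
          ext C
          rw [Finset.mem_filter, mem_confs, mem_confs]
          constructor
          · rintro ⟨⟨h1, h2, h3⟩, h4⟩
            exact ⟨h1, insert_subset h4 h2, h3⟩
          · rintro ⟨h1, h2, h3⟩
            have hMC : M ⊆ C := (subset_insert _ _).trans h2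
            exact ⟨⟨h1, hMC, h3⟩, h2 (mem_insert_self _ _)⟩
        have hWC : ∀ C' ∈ confs k (insert r M) W,
            (((W \ C').card : ℕ) : ℝ≥0∞) * g C' = ((W.card - k : ℕ) : ℝ≥0∞) * g C' := by
          intro C' hC'
          rw [mem_confs] at hC'
          rw [card_sdiff_of_subset hC'.1, hC'.2.2]
        have hAno : (confs k M W).filter (fun C => r ∉ C) = confs k M (W.erase r) := by
          ext C
          rw [Finset.mem_filter, mem_confs, mem_confs]
          constructor
          · rintro ⟨⟨h1, h2, h3⟩, h4⟩
            exact ⟨(subset_erase).2 ⟨h1, h4⟩, h2, h3⟩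
          · rintro ⟨h1, h2, h3⟩
            have := (subset_erase).1 h1
            exact ⟨⟨this.1, h2, h3⟩, this.2⟩
        have hAnocard : ((confs k M W).filter (fun C => r ∉ C)).card
            = (W.card - M.card - 1).choose (k - M.card) := by
          rw [hAno, card_confs ((subset_erase).2 ⟨hMW, hrM⟩) hMk, card_erase_of_mem hrW]
          congr 1
          omega
        have hfp : ENNReal.ofReal (fpR k M W r)
            = ((W.card - k : ℕ) : ℝ≥0∞) * (((W.card - M.card : ℕ) : ℝ≥0∞))⁻¹ := by
          unfold fpR
          rw [if_neg hrM, if_pos ⟨hrW, hMlt⟩, ofReal_nat_div _ _ (by omega), div_eq_mul_inv]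
        have hfp2 : (((confs k M W).filter (fun C => r ∉ C)).card : ℝ≥0∞)
              * (((confs k M W).card : ℝ≥0∞))⁻¹
            = ENNReal.ofReal (fpR k M W r) := by
          rw [hfp, hAnocard, hAcard]
          refine enn_ratio (by omega) (by omega) ?_
          have := nat_id1 (W.card - M.card) (k - M.card) (by omega)
          have he1 : W.card - M.card - (k - M.card) = W.card - k := by omega
          rw [he1] at this
          exact this
        rw [Finset.sum_congr rfl hWC, ← Finset.mul_sum, hyesA, hfp2]
        have hco : (((confs k M W).card : ℝ≥0∞))⁻¹
              + (((confs k M W).card : ℝ≥0∞))⁻¹ * ((((k - M.card : ℕ) : ℝ≥0∞))⁻¹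
                  * ((W.card - k : ℕ) : ℝ≥0∞))
            = (((confs k (insert r M) W).card : ℝ≥0∞))⁻¹ := by
          have hmi : (((k - M.card : ℕ) : ℝ≥0∞) * ((confs k M W).card : ℝ≥0∞))⁻¹
              = (((k - M.card : ℕ) : ℝ≥0∞))⁻¹ * (((confs k M W).card : ℝ≥0∞))⁻¹ :=
            ENNReal.mul_inv (Or.inl hj0) (Or.inl hjt)
          calc (((confs k M W).card : ℝ≥0∞))⁻¹
                + (((confs k M W).card : ℝ≥0∞))⁻¹ * ((((k - M.card : ℕ) : ℝ≥0∞))⁻¹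
                    * ((W.card - k : ℕ) : ℝ≥0∞))
              = (((k - M.card : ℕ) : ℝ≥0∞) * (((k - M.card : ℕ) : ℝ≥0∞))⁻¹)
                  * (((confs k M W).card : ℝ≥0∞))⁻¹
                + (((confs k M W).card : ℝ≥0∞))⁻¹ * ((((k - M.card : ℕ) : ℝ≥0∞))⁻¹
                    * ((W.card - k : ℕ) : ℝ≥0∞)) := by
                rw [ENNReal.mul_inv_cancel hj0 hjt, one_mul]
            _ = (((k - M.card : ℕ) : ℝ≥0∞) + ((W.card - k : ℕ) : ℝ≥0∞))
                  * ((((k - M.card : ℕ) : ℝ≥0∞))⁻¹ * (((confs k M W).card : ℝ≥0∞))⁻¹) := by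
                ring
            _ = (((k - M.card + (W.card - k) : ℕ)) : ℝ≥0∞)
                  * ((((k - M.card) * (confs k M W).card : ℕ) : ℝ≥0∞))⁻¹ := by
                rw [Nat.cast_add, Nat.cast_mul, hmi]
            _ = ((1 : ℕ) : ℝ≥0∞) * (((confs k (insert r M) W).card : ℝ≥0∞))⁻¹ := by
                refine enn_ratio (Nat.mul_ne_zero (by omega) hAn0) hA'n0 ?_
                rw [hA', hAcard]
                have h2 := nat_id2 (W.card - M.card) (k - M.card) (by omega) (by omega)
                have he : k - M.card + (W.card - k) = W.card - M.card := by omega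
                rw [he]
                calc (W.card - M.card) * ((W.card - M.card - 1).choose (k - M.card - 1))
                    = (W.card - M.card - 1).choose (k - M.card - 1) * (W.card - M.card) :=
                      Nat.mul_comm _ _
                  _ = (k - M.card) * (W.card - M.card).choose (k - M.card) := h2.symm
                  _ = 1 * ((k - M.card) * (W.card - M.card).choose (k - M.card)) := by
                      rw [Nat.one_mul]
            _ = (((confs k (insert r M) W).card : ℝ≥0∞))⁻¹ := by
                rw [Nat.cast_one, one_mul]
        rw [← hco]
        ring
      · -- clean request
        have hMW' : insert r M ⊆ insert r W := insert_subset_insert _ hMW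
        have hMk' : (insert r M).card ≤ k := by rw [card_insert_of_notMem hrM]; omega
        have hkW' : k ≤ (insert r W).card := by rw [card_insert_of_notMem hrW]; omega
        have hA' : (confs k (insert r M) (insert r W)).card
            = (W.card - M.card).choose (k - M.card - 1) := by
          rw [card_confs hMW' hMk', card_insert_of_notMem hrM, card_insert_of_notMem hrW]
          congr 1 <;> omega
        have hA'n0 : (confs k (insert r M) (insert r W)).card ≠ 0 :=
          (confs_nonempty hMW' hMk' hkW').card_pos.ne'
        have hyesE : (confs k M W).filter (fun C => r ∈ C) = ∅ := by
          rw [Finset.filter_eq_empty_iff]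
          intro C hC hrC
          exact hrW ((mem_confs.1 hC).1 hrC)
        have hnoA : (confs k M W).filter (fun C => r ∉ C) = confs k M W := by
          rw [Finset.filter_true_of_mem]
          intro C hC hrC
          exact hrW ((mem_confs.1 hC).1 hrC)
        have hfp : ENNReal.ofReal (fpR k M W r) = 1 := by
          unfold fpR
          rw [if_neg hrM, if_neg (by rintro ⟨h1, -⟩; exact hrW h1), ENNReal.ofReal_one]
        have hWC : ∀ C' ∈ confs k (insert r M) (insert r W),
            (((W \ C').card : ℕ) : ℝ≥0∞) * g C' = ((W.card - k + 1 : ℕ) : ℝ≥0∞) * g C' := by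
          intro C' hC'
          rw [mem_confs] at hC'
          obtain ⟨h1, h2, h3⟩ := hC'
          have hrC' : r ∈ C' := h2 (mem_insert_self _ _)
          have hCe : C'.erase r ⊆ W := by
            intro x hx
            rw [mem_erase] at hx
            rcases mem_insert.1 (h1 hx.2) with h | h
            · exact absurd h hx.1
            · exact h
          have hWe : W \ C' = W \ C'.erase r := by
            ext x
            simp only [mem_sdiff, mem_erase]
            constructor
            · rintro ⟨hxW, hxC⟩
              exact ⟨hxW, fun hc => hxC hc.2⟩
            · rintro ⟨hxW, hxC⟩
              refine ⟨hxW, fun hc => hxC ⟨?_, hc⟩⟩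
              rintro rfl
              exact hrW hxW
          rw [hWe, card_sdiff_of_subset hCe, card_erase_of_mem hrC', h3]
          congr 2
          omega
        have h1A : ((confs k M W).card : ℝ≥0∞) * (((confs k M W).card : ℝ≥0∞))⁻¹ = 1 :=
          ENNReal.mul_inv_cancel hA0 (ENNReal.natCast_ne_top _)
        have hco : (((confs k M W).card : ℝ≥0∞))⁻¹ * ((((k - M.card : ℕ) : ℝ≥0∞))⁻¹
              * ((W.card - k + 1 : ℕ) : ℝ≥0∞))
            = (((confs k (insert r M) (insert r W)).card : ℝ≥0∞))⁻¹ := by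
          have hmi : (((k - M.card : ℕ) : ℝ≥0∞) * ((confs k M W).card : ℝ≥0∞))⁻¹
              = (((k - M.card : ℕ) : ℝ≥0∞))⁻¹ * (((confs k M W).card : ℝ≥0∞))⁻¹ :=
            ENNReal.mul_inv (Or.inl hj0) (Or.inl hjt)
          calc (((confs k M W).card : ℝ≥0∞))⁻¹ * ((((k - M.card : ℕ) : ℝ≥0∞))⁻¹
                * ((W.card - k + 1 : ℕ) : ℝ≥0∞))
              = ((W.card - k + 1 : ℕ) : ℝ≥0∞)
                  * ((((k - M.card : ℕ) : ℝ≥0∞))⁻¹ * (((confs k M W).card : ℝ≥0∞))⁻¹) := by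
                ring
            _ = ((W.card - k + 1 : ℕ) : ℝ≥0∞)
                  * ((((k - M.card) * (confs k M W).card : ℕ) : ℝ≥0∞))⁻¹ := by
                rw [Nat.cast_mul, hmi]
            _ = ((1 : ℕ) : ℝ≥0∞)
                  * (((confs k (insert r M) (insert r W)).card : ℝ≥0∞))⁻¹ := by
                refine enn_ratio (Nat.mul_ne_zero (by omega) hAn0) hA'n0 ?_
                rw [hA', hAcard]
                have h3 := nat_id3 (W.card - M.card) (k - M.card) (by omega) (by omega)
                have he : W.card - M.card - (k - M.card) + 1 = W.card - k + 1 := by omega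
                rw [he] at h3
                calc (W.card - k + 1) * (W.card - M.card).choose (k - M.card - 1)
                    = (k - M.card) * (W.card - M.card).choose (k - M.card) := h3.symm
                  _ = 1 * ((k - M.card) * (W.card - M.card).choose (k - M.card)) := by
                      rw [Nat.one_mul]
            _ = (((confs k (insert r M) (insert r W)).card : ℝ≥0∞))⁻¹ := by
                rw [Nat.cast_one, one_mul]
        rw [hyesE, Finset.sum_empty, hnoA, hfp, h1A]
        rw [Finset.sum_congr rfl hWC, ← Finset.mul_sum]
        rw [← hco]
        ring

lemma fpR_nonneg {k : ℕ} (M W : Finset (Fin n)) (r : Fin n) : 0 ≤ fpR k M W r := by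
  unfold fpR
  split
  · exact le_refl _
  split
  · positivity
  · exact zero_le_one

lemma costBound_nonneg {k : ℕ} : ∀ (σ : List (Fin n)) p, 0 ≤ costBound k σ p := by
  intro σ
  induction σ with
  | nil => intro p; exact le_refl _
  | cons r rest ih =>
    intro p
    have := ih (stepSt k p r)
    have := fpR_nonneg (k := k) p.1 p.2 r
    show 0 ≤ fpR k p.1 p.2 r + costBound k rest (stepSt k p r)
    linarith

lemma avg_eCost {k : ℕ} (hk : 1 ≤ k) (hkn : k ≤ n) :
    ∀ (rest hist : List (Fin n)),
      ∑ C ∈ confs k (stAfter k n hist).1 (stAfter k n hist).2,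
          (((confs k (stAfter k n hist).1 (stAfter k n hist).2).card : ℝ≥0∞))⁻¹
            * eCost (markingKernel k n) rest hist C
        = ENNReal.ofReal (costBound k rest (stAfter k n hist)) := by
  intro rest
  induction rest with
  | nil =>
    intro hist
    have : ∀ C ∈ confs k (stAfter k n hist).1 (stAfter k n hist).2,
        (((confs k (stAfter k n hist).1 (stAfter k n hist).2).card : ℝ≥0∞))⁻¹
          * eCost (markingKernel k n) [] hist C = 0 := by
      intro C _
      rw [eCost_nil, mul_zero]
    rw [Finset.sum_congr rfl this, Finset.sum_const_zero]
    show (0 : ℝ≥0∞) = ENNReal.ofReal 0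
    rw [ENNReal.ofReal_zero]
  | cons r rest ih =>
    intro hist
    have hinv : InvSt k (stAfter k n hist) := invSt_stAfter hk hkn hist
    have hinv' : InvSt k ((stAfter k n hist).1, (stAfter k n hist).2) := by
      rw [Prod.mk.eta]; exact hinv
    have hmark : marksAfter k hist = (stAfter k n hist).1 := (stAfter_fst k hist).symm
    have hcongr : ∀ C ∈ confs k (stAfter k n hist).1 (stAfter k n hist).2,
        (((confs k (stAfter k n hist).1 (stAfter k n hist).2).card : ℝ≥0∞))⁻¹
          * eCost (markingKernel k n) (r :: rest) hist C
        = (((confs k (stAfter k n hist).1 (stAfter k n hist).2).card : ℝ≥0∞))⁻¹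
          * ∑' C', (markingKernel k n hist C r) C' *
              (((C' \ C).card : ℝ≥0∞) + eCost (markingKernel k n) rest (hist ++ [r]) C') := by
      intro C _
      rw [eCost_cons]
    rw [Finset.sum_congr rfl hcongr]
    have key := step_avg (n := n) (k := k) hk hist hinv' hmark r
      (eCost (markingKernel k n) rest (hist ++ [r]))
    rw [key]
    have hstep : stepSt k ((stAfter k n hist).1, (stAfter k n hist).2) r
        = stAfter k n (hist ++ [r]) := by
      rw [Prod.mk.eta, stAfter_append]
    rw [hstep, ih (hist ++ [r])]
    rw [← ENNReal.ofReal_add (fpR_nonneg _ _ _) (costBound_nonneg _ _)]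
    congr 1
    show fpR k (stAfter k n hist).1 (stAfter k n hist).2 r
        + costBound k rest (stAfter k n (hist ++ [r]))
      = costBound k (r :: rest) (stAfter k n hist)
    rw [stAfter_append]
    rfl

lemma expCost_eq {k : ℕ} (hk : 1 ≤ k) (hkn : k ≤ n) (σ : List (Fin n)) :
    expCost k (markingKernel k n) σ = costBound k σ (initConf k n, initConf k n) := by
  have h0 : stAfter k n [] = (initConf k n, initConf k n) := rfl
  have h1 := avg_eCost hk hkn σ []
  rw [h0] at h1
  have h2 : confs k (initConf k n, initConf k n).1 (initConf k n, initConf k n).2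
      = {initConf k n} := confs_self (card_initConf hkn)
  rw [h2, Finset.sum_singleton, card_singleton, Nat.cast_one, inv_one, one_mul] at h1
  have h3 : expCost k (markingKernel k n) σ
      = (eCost (markingKernel k n) σ [] (initConf k n)).toReal := by
    unfold expCost eCost
    rw [ENNReal.tsum_toReal_eq]
    · refine tsum_congr fun Cs => ?_
      rw [ENNReal.toReal_mul]
      simp [run]
    · intro Cs
      exact ENNReal.mul_ne_top (PMF.apply_ne_top _ _) (ENNReal.natCast_ne_top _)
  rw [h3, h1, ENNReal.toReal_ofReal (costBound_nonneg _ _)]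

lemma harmonic_mono' {a b : ℕ} (h : a ≤ b) : harmonic a ≤ harmonic b := by
  unfold harmonic
  apply Finset.sum_le_sum_of_subset_of_nonneg (Finset.range_subset_range.2 h)
  intro i _ _
  positivity

lemma one_le_harmonic {d : ℕ} (h : 1 ≤ d) : (1 : ℚ) ≤ harmonic d := by
  have h1 : harmonic 1 = 1 := by
    rw [show (1 : ℕ) = 0 + 1 from rfl, harmonic_succ]
    norm_num
  rw [← h1]
  exact harmonic_mono' h

/-- The potential for the harmonic bound. -/
noncomputable def phi {n : ℕ} (k : ℕ) (p : Finset (Fin n) × Finset (Fin n)) : ℝ :=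
  ((p.2.card - k : ℕ) : ℝ) * (((harmonic (p.2.card - p.1.card) : ℚ) : ℝ) - 1)

lemma phi_nonneg {k : ℕ} {p : Finset (Fin n) × Finset (Fin n)} (h : InvSt k p) :
    0 ≤ phi k p := by
  unfold phi
  rcases Nat.eq_zero_or_pos (p.2.card - k) with hc | hc
  · rw [hc]; simp
  · have hd : 1 ≤ p.2.card - p.1.card := by
      have := h.card1; have := h.card2; omega
    have := one_le_harmonic hd
    have h2 : (1 : ℝ) ≤ ((harmonic (p.2.card - p.1.card) : ℚ) : ℝ) := by exact_mod_cast this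
    have h3 : (0 : ℝ) ≤ ((p.2.card - k : ℕ) : ℝ) := by positivity
    nlinarith

lemma invSt_foldl {k : ℕ} (hk : 1 ≤ k) {p : Finset (Fin n) × Finset (Fin n)}
    (h : InvSt k p) (σ : List (Fin n)) : InvSt k (σ.foldl (stepSt k) p) := by
  induction σ generalizing p with
  | nil => exact h
  | cons r rest ih => exact ih (invSt_step hk h r)

lemma cost_step_le {k : ℕ} (hk : 1 ≤ k) {p : Finset (Fin n) × Finset (Fin n)}
    (h : InvSt k p) (r : Fin n) :
    fpR k p.1 p.2 r + phi k (stepSt k p r)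
      ≤ (harmonic k : ℝ) * (cleanStep k p r) + phi k p := by
  classical
  obtain ⟨M, W⟩ := p
  have hMW : M ⊆ W := h.sub
  have hMk : M.card ≤ k := h.card1
  have hkW : k ≤ W.card := h.card2
  have hWM : W.card ≤ M.card + k := h.card3
  have hHk : (1 : ℚ) ≤ harmonic k := one_le_harmonic hk
  by_cases hrM : r ∈ M
  · have hstep : stepSt k (M, W) r = (M, W) := by
      unfold stepSt
      rw [if_neg]
      · dsimp only
        rw [insert_eq_self.2 hrM, insert_eq_self.2 (hMW hrM)]
      · dsimp only
        rw [insert_eq_self.2 hrM]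
        omega
    have hfp : fpR k M W r = 0 := by unfold fpR; rw [if_pos hrM]
    have hcs : cleanStep k (M, W) r = 0 := by unfold cleanStep; rw [if_pos hrM]
    rw [hstep, hfp, hcs]
    simp
  · by_cases hMc : M.card = k
    · -- reset step
      have hins : (insert r M).card = k + 1 := by
        rw [card_insert_of_notMem hrM, hMc]
      have hstep : stepSt k (M, W) r = ({r}, insert r M) := by
        unfold stepSt; rw [if_pos hins]
      have hfp : fpR k M W r = 1 := by
        unfold fpR
        rw [if_neg hrM, if_neg (by rintro ⟨-, h2⟩; omega)]
      have hcs : cleanStep k (M, W) r = 1 := by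
        unfold cleanStep
        rw [if_neg hrM, if_pos hins]
      have hphi' : phi k ({r}, insert r M) = ((harmonic k : ℚ) : ℝ) - 1 := by
        unfold phi
        dsimp only
        rw [hins, card_singleton]
        have e1 : k + 1 - k = 1 := by omega
        have e2 : k + 1 - 1 = k := by omega
        rw [e1, e2]
        norm_num
      have hphi : 0 ≤ phi k (M, W) := phi_nonneg h
      rw [hstep, hfp, hcs, hphi']
      push_cast
      linarith
    · have hMlt : M.card < k := lt_of_le_of_ne hMk hMc
      have hnores : ¬ (insert r M).card = k + 1 := by
        rw [card_insert_of_notMem hrM]; omega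
      have hstep : stepSt k (M, W) r = (insert r M, insert r W) := by
        unfold stepSt; rw [if_neg hnores]
      rw [hstep]
      by_cases hrW : r ∈ W
      · -- stale
        have hiW : insert r W = W := insert_eq_self.2 hrW
        have hfp : fpR k M W r
            = ((W.card - k : ℕ) : ℝ) / ((W.card - M.card : ℕ) : ℝ) := by
          unfold fpR; rw [if_neg hrM, if_pos ⟨hrW, hMlt⟩]
        have hcs : cleanStep k (M, W) r = 0 := by
          unfold cleanStep
          rw [if_neg hrM, if_neg hnores, if_pos hrW]
        rw [hfp, hcs, hiW]
        unfold phi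
        dsimp only
        rw [card_insert_of_notMem hrM]
        set d := W.card - M.card with hd
        have hd1 : 1 ≤ d := by omega
        have he : W.card - (M.card + 1) = d - 1 := by omega
        rw [he]
        have hh : harmonic d = harmonic (d - 1) + ((d : ℚ))⁻¹ := by
          conv_lhs => rw [show d = (d - 1) + 1 by omega, harmonic_succ]
          congr 2
          push_cast [show d - 1 + 1 = d by omega]
          ring
        have hdpos : (0 : ℝ) < (d : ℝ) := by exact_mod_cast hd1
        have hhr : ((harmonic d : ℚ) : ℝ)
            = ((harmonic (d - 1) : ℚ) : ℝ) + ((d : ℝ))⁻¹ := by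
          rw [hh]; push_cast; ring
        rw [hhr]
        have hcle : ((W.card - k : ℕ) : ℝ) ≤ (d : ℝ) := by
          have : (W.card - k : ℕ) ≤ d := by omega
          exact_mod_cast this
        have hcnn : (0:ℝ) ≤ ((W.card - k : ℕ) : ℝ) := by positivity
        have hdiv : ((W.card - k : ℕ) : ℝ) / ((W.card - M.card : ℕ) : ℝ)
            = ((W.card - k : ℕ) : ℝ) * ((d:ℝ))⁻¹ := by
          rw [← hd, div_eq_mul_inv]
        rw [hdiv]
        push_cast
        ring_nf
        nlinarith [hdpos, mul_pos hdpos hdpos]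
      · -- clean
        have hfp : fpR k M W r = 1 := by
          unfold fpR; rw [if_neg hrM, if_neg (by rintro ⟨h1, -⟩; exact hrW h1)]
        have hcs : cleanStep k (M, W) r = 1 := by
          unfold cleanStep
          rw [if_neg hrM, if_neg hnores, if_neg hrW]
        rw [hfp, hcs]
        unfold phi
        dsimp only
        rw [card_insert_of_notMem hrM, card_insert_of_notMem hrW]
        have he1 : W.card + 1 - k = (W.card - k) + 1 := by omega
        have he2 : W.card + 1 - (M.card + 1) = W.card - M.card := by omega
        rw [he1, he2]
        have hdk : W.card - M.card ≤ k := by omega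
        have hmono : ((harmonic (W.card - M.card) : ℚ) : ℝ) ≤ ((harmonic k : ℚ) : ℝ) := by
          exact_mod_cast harmonic_mono' hdk
        push_cast
        nlinarith [hmono]

lemma costBound_le_harmonic {k : ℕ} (hk : 1 ≤ k) :
    ∀ (σ : List (Fin n)) (p : Finset (Fin n) × Finset (Fin n)), InvSt k p →
      costBound k σ p + phi k (σ.foldl (stepSt k) p)
        ≤ (harmonic k : ℝ) * (cleanCt k σ p) + phi k p := by
  intro σ
  induction σ with
  | nil =>
    intro p hp
    show (0 : ℝ) + phi k p ≤ (harmonic k : ℝ) * ((0 : ℕ) : ℝ) + phi k p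
    simp
  | cons r rest ih =>
    intro p hp
    have h1 := ih (stepSt k p r) (invSt_step hk hp r)
    have h2 := cost_step_le hk hp r
    show fpR k p.1 p.2 r + costBound k rest (stepSt k p r)
        + phi k (rest.foldl (stepSt k) (stepSt k p r))
      ≤ (harmonic k : ℝ) * ((cleanStep k p r + cleanCt k rest (stepSt k p r) : ℕ) : ℝ)
        + phi k p
    push_cast
    have hHk : (0:ℝ) ≤ (harmonic k : ℝ) := by
      have := one_le_harmonic hk
      have : (1:ℝ) ≤ ((harmonic k : ℚ) : ℝ) := by exact_mod_cast this
      linarith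
    nlinarith [h1, h2]

/-- The potential for the offline lower bound. -/
noncomputable def psi {n : ℕ} (k : ℕ) (p : Finset (Fin n) × Finset (Fin n))
    (C : Finset (Fin n)) : ℝ :=
  ((p.2 \ C).card : ℝ) + ((p.1 \ C).card : ℝ) - ((p.2.card - k : ℕ) : ℝ)

lemma sdiff_card_triangle (X C D : Finset (Fin n)) :
    (X \ D).card ≤ (X \ C).card + (C \ D).card := by
  have hsub : X \ D ⊆ (X \ C) ∪ (C \ D) := by
    intro x hx
    rw [mem_sdiff] at hx
    by_cases hc : x ∈ C
    · exact mem_union_right _ (mem_sdiff.2 ⟨hc, hx.2⟩)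
    · exact mem_union_left _ (mem_sdiff.2 ⟨hx.1, hc⟩)
  exact (card_le_card hsub).trans (card_union_le _ _)

lemma psi_nonneg {k : ℕ} {p : Finset (Fin n) × Finset (Fin n)} {C : Finset (Fin n)}
    (h : InvSt k p) (hC : C.card = k) : 0 ≤ psi k p C := by
  unfold psi
  have h1 : p.2.card - k ≤ (p.2 \ C).card := by
    have := Finset.le_card_sdiff C p.2
    omega
  have h2 : ((p.2.card - k : ℕ) : ℝ) ≤ ((p.2 \ C).card : ℝ) := by exact_mod_cast h1
  have h3 : (0:ℝ) ≤ ((p.1 \ C).card : ℝ) := by positivity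
  linarith

lemma clean_step_le {k : ℕ} (hk : 1 ≤ k) {p : Finset (Fin n) × Finset (Fin n)}
    (h : InvSt k p) {r : Fin n} {C D : Finset (Fin n)}
    (hrD : r ∈ D) (hC : C.card = k) (hD : D.card = k) :
    (cleanStep k p r : ℝ) + psi k (stepSt k p r) D
      ≤ 2 * ((D \ C).card : ℝ) + psi k p C := by
  classical
  obtain ⟨M, W⟩ := p
  have hMW : M ⊆ W := h.sub
  have hMk : M.card ≤ k := h.card1
  have hkW : k ≤ W.card := h.card2
  have hCD : (C \ D).card = (D \ C).card := Finset.card_sdiff_comm (by rw [hC, hD])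
  have htW : (W \ D).card ≤ (W \ C).card + (D \ C).card := by
    have := sdiff_card_triangle W C D
    omega
  have htM : (M \ D).card ≤ (M \ C).card + (D \ C).card := by
    have := sdiff_card_triangle M C D
    omega
  have hWC : W.card - k ≤ (W \ C).card := by
    have := Finset.le_card_sdiff C W
    omega
  have hrins : ∀ (X : Finset (Fin n)), insert r X \ D = X \ D := by
    intro X
    ext x
    simp only [mem_sdiff, mem_insert]
    constructor
    · rintro ⟨rfl | hx, h2⟩
      · exact absurd hrD h2
      · exact ⟨hx, h2⟩
    · rintro ⟨h1, h2⟩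
      exact ⟨Or.inr h1, h2⟩
  by_cases hrM : r ∈ M
  · have hstep : stepSt k (M, W) r = (M, W) := by
      unfold stepSt
      rw [if_neg]
      · dsimp only
        rw [insert_eq_self.2 hrM, insert_eq_self.2 (hMW hrM)]
      · dsimp only
        rw [insert_eq_self.2 hrM]
        omega
    have hcs : cleanStep k (M, W) r = 0 := by unfold cleanStep; rw [if_pos hrM]
    rw [hstep, hcs]
    unfold psi
    dsimp only
    push_cast
    have c1 : ((W \ D).card : ℝ) ≤ ((W \ C).card : ℝ) + ((D \ C).card : ℝ) := by
      exact_mod_cast htW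
    have c2 : ((M \ D).card : ℝ) ≤ ((M \ C).card : ℝ) + ((D \ C).card : ℝ) := by
      exact_mod_cast htM
    linarith
  · by_cases hMc : M.card = k
    · have hins : (insert r M).card = k + 1 := by
        rw [card_insert_of_notMem hrM, hMc]
      have hstep : stepSt k (M, W) r = ({r}, insert r M) := by
        unfold stepSt; rw [if_pos hins]
      have hcs : cleanStep k (M, W) r = 1 := by
        unfold cleanStep; rw [if_neg hrM, if_pos hins]
      rw [hstep, hcs]
      unfold psi
      dsimp only
      rw [hins, hrins M]
      have hsing : (({r} : Finset (Fin n)) \ D).card = 0 := by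
        rw [card_eq_zero, Finset.sdiff_eq_empty_iff_subset]
        exact singleton_subset_iff.2 hrD
      rw [hsing]
      have he : k + 1 - k = 1 := by omega
      rw [he]
      have c2 : ((M \ D).card : ℝ) ≤ ((M \ C).card : ℝ) + ((D \ C).card : ℝ) := by
        exact_mod_cast htM
      have c3 : ((W.card - k : ℕ) : ℝ) ≤ ((W \ C).card : ℝ) := by exact_mod_cast hWC
      push_cast
      linarith
    · have hnores : ¬ (insert r M).card = k + 1 := by
        rw [card_insert_of_notMem hrM]; omega
      have hstep : stepSt k (M, W) r = (insert r M, insert r W) := by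
        unfold stepSt; rw [if_neg hnores]
      rw [hstep]
      unfold psi
      dsimp only
      rw [hrins M, hrins W]
      by_cases hrW : r ∈ W
      · have hcs : cleanStep k (M, W) r = 0 := by
          unfold cleanStep; rw [if_neg hrM, if_neg hnores, if_pos hrW]
        rw [hcs, insert_eq_self.2 hrW]
        have c1 : ((W \ D).card : ℝ) ≤ ((W \ C).card : ℝ) + ((D \ C).card : ℝ) := by
          exact_mod_cast htW
        have c2 : ((M \ D).card : ℝ) ≤ ((M \ C).card : ℝ) + ((D \ C).card : ℝ) := by
          exact_mod_cast htM
        push_cast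
        linarith
      · have hcs : cleanStep k (M, W) r = 1 := by
          unfold cleanStep; rw [if_neg hrM, if_neg hnores, if_neg hrW]
        rw [hcs, card_insert_of_notMem hrW]
        have he : W.card + 1 - k = (W.card - k) + 1 := by omega
        rw [he]
        have c1 : ((W \ D).card : ℝ) ≤ ((W \ C).card : ℝ) + ((D \ C).card : ℝ) := by
          exact_mod_cast htW
        have c2 : ((M \ D).card : ℝ) ≤ ((M \ C).card : ℝ) + ((D \ C).card : ℝ) := by
          exact_mod_cast htM
        push_cast
        linarith

lemma cleanCt_le_twice_cost {k : ℕ} (hk : 1 ≤ k) :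
    ∀ (σ : List (Fin n)) (Cs : List (Finset (Fin n)))
      (p : Finset (Fin n) × Finset (Fin n)) (C : Finset (Fin n)),
      List.Forall₂ (· ∈ ·) σ Cs → (∀ D ∈ Cs, D.card = k) → InvSt k p → C.card = k →
      (cleanCt k σ p : ℝ) ≤ 2 * (listCost C Cs : ℝ) + psi k p C := by
  intro σ
  induction σ with
  | nil =>
    intro Cs p C hf _ hp hC
    cases hf
    have := psi_nonneg hp hC
    show ((0:ℕ) : ℝ) ≤ 2 * ((listCost C [] : ℕ) : ℝ) + psi k p C
    show ((0:ℕ) : ℝ) ≤ 2 * ((0:ℕ) : ℝ) + psi k p C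
    push_cast
    linarith
  | cons r rest ih =>
    intro Cs p C hf hcards hp hC
    cases hf with
    | cons hrD hf' =>
      rename_i D Cs'
      have hD : D.card = k := hcards D (List.mem_cons_self)
      have h1 := ih Cs' (stepSt k p r) D hf'
        (fun E hE => hcards E (List.mem_cons_of_mem _ hE)) (invSt_step hk hp r) hD
      have h2 := clean_step_le hk hp hrD hC hD
      show ((cleanStep k p r + cleanCt k rest (stepSt k p r) : ℕ) : ℝ)
        ≤ 2 * ((listCost C (D :: Cs') : ℕ) : ℝ) + psi k p C
      have hlc : listCost C (D :: Cs') = (D \ C).card + listCost D Cs' := rfl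
      rw [hlc]
      push_cast
      push_cast at h1
      linarith

lemma OPT_exists {k : ℕ} (hk : 1 ≤ k) (hkn : k < n) (σ : List (Fin n)) :
    ∃ Cs, Serves k σ Cs ∧ listCost (initConf k n) Cs = OPT k n σ := by
  classical
  have h0n : (0 : ℕ) < n := by omega
  have he0 : (⟨0, h0n⟩ : Fin n) ∈ initConf k n := by
    simp only [initConf, Finset.mem_filter, Finset.mem_univ, true_and]
    exact hk
  have hne : {m | ∃ Cs, Serves k σ Cs ∧ listCost (initConf k n) Cs = m}.Nonempty := by
    set f : Fin n → Finset (Fin n) := fun r =>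
      if r ∈ initConf k n then initConf k n
      else insert r ((initConf k n).erase ⟨0, h0n⟩) with hf
    refine ⟨listCost (initConf k n) (σ.map f), σ.map f, ⟨?_, ?_⟩, rfl⟩
    · rw [List.forall₂_map_right_iff]
      have : ∀ r ∈ σ, r ∈ f r := by
        intro r _
        by_cases h : r ∈ initConf k n
        · rw [hf]; dsimp only; rw [if_pos h]; exact h
        · rw [hf]; dsimp only; rw [if_neg h]; exact mem_insert_self _ _
      exact (List.forall₂_same).2 this
    · intro D hD
      rw [List.mem_map] at hD
      obtain ⟨r, _, rfl⟩ := hD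
      by_cases h : r ∈ initConf k n
      · rw [hf]; dsimp only; rw [if_pos h]; exact card_initConf hkn.le
      · rw [hf]; dsimp only
        rw [if_neg h, card_insert_of_notMem (fun hc => h (erase_subset _ _ hc)),
          card_erase_of_mem he0, card_initConf hkn.le]
        omega
  exact Nat.sInf_mem hne

end Marking

theorem marking_is_two_Hk_competitive (k n : ℕ) (hk : 1 ≤ k) (hkn : k < n) :
    ∃ a : ℝ, ∀ σ : List (Fin n),
      expCost k (markingKernel k n) σ
        ≤ 2 * (harmonic k : ℝ) * (OPT k n σ : ℝ) + a := by
  classical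
  refine ⟨0, fun σ => ?_⟩
  rw [Marking.expCost_eq hk hkn.le σ]
  have hinv : Marking.InvSt k ((initConf k n, initConf k n)) := Marking.invSt_init hkn.le
  have hphi0 : Marking.phi k (initConf k n, initConf k n) = 0 := by
    unfold Marking.phi
    dsimp only
    rw [Marking.card_initConf hkn.le, Nat.sub_self]
    simp
  have hb := Marking.costBound_le_harmonic hk σ (initConf k n, initConf k n) hinv
  have hfin := Marking.phi_nonneg (Marking.invSt_foldl hk hinv σ)
  obtain ⟨Cs, hserve, hcost⟩ := Marking.OPT_exists hk hkn σ
  have hpsi0 : Marking.psi k (initConf k n, initConf k n) (initConf k n) = 0 := by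
    unfold Marking.psi
    dsimp only
    rw [Finset.sdiff_self, Marking.card_initConf hkn.le, Nat.sub_self]
    simp
  have hclean := Marking.cleanCt_le_twice_cost hk σ Cs (initConf k n, initConf k n)
    (initConf k n) hserve.1 hserve.2 hinv (Marking.card_initConf hkn.le)
  rw [hcost, hpsi0] at hclean
  have hH : (0:ℝ) ≤ (harmonic k : ℝ) := by
    have := Marking.one_le_harmonic hk
    have h2 : (1:ℝ) ≤ ((harmonic k : ℚ) : ℝ) := by exact_mod_cast this
    linarith
  have hmul := mul_le_mul_of_nonneg_left hclean hH
  rw [hphi0] at hb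
  linarith
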